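/- Let T ∈ ℚ⟦X⟧ be the power series whose 0-th coefficient is 0 and whose n-th coefficient for n ≥ 1 is n^{n−1}/n!, i.e., the exponential generating function of the sequence n^{n−1} of labeled rooted trees on n vertices. Then T satisfies the functional equation T = X·exp(T), where exp(T) denotes the composition of the exponential power series with T (well-defined since T has zero constant term). -/

import Mathlib

open Finset Polynomial
open scoped fwdDiff

lemma fd : ∀ d : ℕ, ∀ x : ℚ, ∀ n, d < n →
    (fwdDiff (1:ℚ))^[n] (fun y : ℚ => (x+y)^d) = 0 := by
  intro d
  induction d using Nat.strong_induction_on with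
  | _ d IH =>
    intro x n hn
    obtain ⟨n, rfl⟩ : ∃ m, n = m + 1 := ⟨n-1, by omega⟩
    rw [Function.iterate_succ_apply]
    have h1 : fwdDiff (1:ℚ) (fun y : ℚ => (x+y)^d)
        = ∑ j ∈ range d, ((d.choose j : ℚ)) • (fun y : ℚ => (x+y)^j) := by
      funext y
      simp only [fwdDiff, Finset.sum_apply, Pi.smul_apply, smul_eq_mul]
      rw [show x + (y+1) = (x+y) + 1 by ring, add_pow]
      rw [Finset.sum_range_succ]
      simp [mul_comm]
    rw [h1, fwdDiff_iter_finset_sum]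
    funext y
    simp only [Finset.sum_apply, Pi.zero_apply]
    apply Finset.sum_eq_zero
    intro j hj
    rw [fwdDiff_iter_const_smul, IH j (mem_range.mp hj) x n (by have := mem_range.mp hj; omega)]
    simp

lemma fd' {d n : ℕ} (h : d < n) (x : ℚ) :
    ∑ k ∈ range (n+1), (-1:ℚ)^(n-k) * (n.choose k) * (x+k)^d = 0 := by
  have := congrFun (fd d x n h) 0
  rw [fwdDiff_iter_eq_sum_shift] at this
  simp only [Pi.zero_apply, smul_eq_mul, nsmul_eq_mul, mul_one, zero_add] at this
  rw [← this]
  apply Finset.sum_congr rfl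
  intro k _
  rw [zsmul_eq_mul]
  push_cast
  ring

/-- `p x k = x (x+k)^{k-1}`, with the convention that it is `1` for `k = 0`. -/
noncomputable def abp (x : ℚ) (k : ℕ) : ℚ := if k = 0 then 1 else x*(x+k)^(k-1)

lemma abp_mul (x : ℚ) (k n : ℕ) (hk : k ≤ n) (hn : 1 ≤ n) :
    abp x k * (x+k)^(n-k) = x * (x+k)^(n-1) := by
  rcases Nat.eq_zero_or_pos k with rfl | hk0
  · simp only [abp, if_pos rfl, one_mul, Nat.sub_zero, Nat.cast_zero, add_zero]
    obtain ⟨m, rfl⟩ : ∃ m, n = m+1 := ⟨n-1, by omega⟩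
    rw [pow_succ']
    simp
  · rw [abp, if_neg (by omega), mul_assoc, ← pow_add]
    congr 2
    omega

lemma eq_of_deriv {P Q : ℚ[X]} (a : ℚ) (hd : derivative P = derivative Q)
    (he : P.eval a = Q.eval a) : P = Q := by
  have h0 : derivative (P - Q) = 0 := by rw [derivative_sub, hd, sub_self]
  obtain ⟨c, hc⟩ := Polynomial.natDegree_eq_zero.mp
    (Polynomial.natDegree_eq_zero_of_derivative_eq_zero h0)
  have : P - Q = C c := hc.symm
  have hc0 : c = 0 := by
    have := congrArg (Polynomial.eval a) this
    simpa [he] using this.symm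
  have : P - Q = 0 := by rw [this, hc0, map_zero]
  exact sub_eq_zero.mp this

lemma abelPoly : ∀ n : ℕ, ∀ x : ℚ,
    ∑ k ∈ range (n+1), C ((n.choose k : ℚ) * abp x k) * (X + C ((n:ℚ) - k))^(n-k)
      = (X + C (x + n))^n := by
  intro n
  induction n with
  | zero => intro x; simp [abp]
  | succ n IH =>
    intro x
    apply eq_of_deriv (-(x+(n+1)))
    · -- derivatives agree
      have hcomp : ∑ k ∈ range (n+1),
          C ((n.choose k : ℚ) * abp x k) * ((X+1) + C ((n:ℚ) - k))^(n-k)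
          = ((X+1) + C (x + n))^n := by
        have := congrArg (Polynomial.aeval (R := ℚ) ((X:ℚ[X]) + 1)) (IH x)
        simpa only [map_sum, map_mul, map_pow, map_add, Polynomial.aeval_X,
          Polynomial.aeval_C, Polynomial.algebraMap_eq, map_one] using this
      rw [derivative_sum]
      have hterm : ∀ k ∈ range (n+1+1),
          derivative (C (((n+1).choose k : ℚ) * abp x k) * (X + C (((n+1:ℕ):ℚ) - k))^(n+1-k))
          = C (((n+1):ℚ)) * (C ((n.choose k : ℚ) * abp x k) * ((X+1) + C ((n:ℚ) - k))^(n-k)) := by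
        intro k hk
        rw [derivative_mul, derivative_C, zero_mul, zero_add, derivative_pow,
          derivative_add, derivative_X, derivative_C, add_zero, mul_one]
        rcases Nat.lt_or_ge k (n+1) with hkn | hkn
        · have he : n + 1 - k - 1 = n - k := by omega
          have hb : (X:ℚ[X]) + 1 + C ((n:ℚ) - k) = X + C (((n+1:ℕ):ℚ) - k) := by
            push_cast
            rw [show ((n:ℚ) + 1 - k) = ((n:ℚ) - k) + 1 by ring, map_add, C_1]
            ring
          rw [he, hb]
          have hc : (((n+1).choose k : ℚ)) * ((n+1-k : ℕ) : ℚ) = ((n+1):ℚ) * (n.choose k : ℚ) := by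
            have := Nat.choose_mul_succ_eq n k
            have h2 : ((n.choose k * (n+1) : ℕ) : ℚ) = (((n+1).choose k * (n+1-k) : ℕ) : ℚ) := by
              exact_mod_cast congrArg (Nat.cast (R := ℚ)) this
            push_cast at h2 ⊢
            linarith
          have hc2 : (((n+1).choose k : ℚ) * abp x k) * (((n+1-k : ℕ)) : ℚ)
              = ((n:ℚ) + 1) * ((n.choose k : ℚ) * abp x k) := by
            rw [mul_right_comm, hc, mul_assoc]
          rw [← mul_assoc, ← map_mul, hc2, map_mul, mul_assoc]
        · -- k = n+1 : both sides vanish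
          have hk1 : k = n+1 := by simp only [mem_range] at hk; omega
          subst hk1
          simp [Nat.choose_succ_self]
      rw [Finset.sum_congr rfl hterm, ← Finset.mul_sum, Finset.sum_range_succ,
        Nat.choose_succ_self]
      push_cast
      rw [derivative_pow, derivative_add, derivative_X, derivative_C, add_zero, mul_one]
      simp only [zero_mul, map_zero, add_zero, Nat.add_sub_cancel]
      rw [hcomp]
      push_cast
      simp only [map_add, C_1]
      ring
    · -- evaluations at -(x+(n+1)) agree
      rw [Polynomial.eval_finset_sum]
      have hterm : ∀ k ∈ range (n+1+1),
          Polynomial.eval (-(x+(n+1)))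
            (C (((n+1).choose k : ℚ) * abp x k) * (X + C (((n+1:ℕ):ℚ) - k))^(n+1-k))
          = x * ((-1:ℚ)^(n+1-k) * ((n+1).choose k) * (x+k)^n) := by
        intro k hk
        have hkn : k ≤ n+1 := by simp only [mem_range] at hk; omega
        rw [Polynomial.eval_mul, Polynomial.eval_pow, Polynomial.eval_add, Polynomial.eval_X,
          Polynomial.eval_C, Polynomial.eval_C]
        rw [show -(x+((n:ℚ)+1)) + (((n+1:ℕ):ℚ) - k) = -(x+k) by push_cast; ring]
        rw [neg_pow]
        rw [show ((n+1).choose k : ℚ) * abp x k * ((-1)^(n+1-k) * (x+k)^(n+1-k))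
            = ((-1:ℚ))^(n+1-k) * ((n+1).choose k) * (abp x k * (x+k)^(n+1-k)) by ring]
        rw [abp_mul x k (n+1) hkn (by omega)]
        simp only [Nat.add_sub_cancel]
        ring
      rw [Finset.sum_congr rfl hterm, ← Finset.mul_sum, fd' (Nat.lt_succ_self n) x, mul_zero]
      rw [Polynomial.eval_pow, Polynomial.eval_add, Polynomial.eval_X, Polynomial.eval_C]
      rw [show -(x+((n:ℚ)+1)) + (x + ((n+1:ℕ):ℚ)) = 0 by push_cast; ring]
      rw [zero_pow (by omega)]

lemma abel1 (n : ℕ) : ∑ k ∈ range (n+1),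
    (n.choose k : ℚ) * abp 1 k * ((n:ℚ) - k)^(n-k) = (1 + (n:ℚ))^n := by
  have := congrArg (Polynomial.eval (0:ℚ)) (abelPoly n 1)
  simpa [Polynomial.eval_finset_sum] using this

lemma key (M : ℕ) :
    ∑ j ∈ range (M+1), ((M+1).choose j : ℚ) * ((j:ℚ)+1)^j * (((M:ℚ)+1)-j)^(M-j)
      = ((M:ℚ)+1) * (((M:ℚ)+2))^M := by
  have h1 := abel1 (M+1)
  rw [Finset.sum_range_succ] at h1
  have hbm : ((M+1).choose (M+1) : ℚ) * abp 1 (M+1) * (((M+1:ℕ):ℚ) - ((M+1:ℕ):ℚ))^((M+1)-(M+1))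
      = ((M:ℚ)+2)^M := by
    rw [Nat.choose_self, Nat.sub_self, pow_zero, abp, if_neg (by omega)]
    push_cast
    norm_num
    ring_nf
  rw [hbm] at h1
  have h2 : ∑ k ∈ range (M+1),
      ((M+1).choose k : ℚ) * abp 1 k * (((M+1:ℕ):ℚ) - k)^((M+1)-k)
      = ∑ j ∈ range (M+1),
      ((M+1).choose j : ℚ) * ((j:ℚ)+1)^j * (((M:ℚ)+1)-j)^(M-j) := by
    rw [← Finset.sum_range_reflect]
    apply Finset.sum_congr rfl
    intro j hj
    have hjM : j ≤ M := by simpa [Nat.lt_succ_iff] using hj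
    simp only [show M + 1 - 1 - j = M - j from by omega]
    rcases Nat.eq_or_lt_of_le hjM with rfl | hjM'
    · -- j = M : index k = 0
      simp only [Nat.sub_self, Nat.sub_zero, Nat.cast_zero, sub_zero, Nat.choose_zero_right,
        Nat.cast_one, one_mul, pow_zero, mul_one]
      rw [show abp 1 0 = 1 by simp [abp], Nat.choose_succ_self_right, pow_succ]
      push_cast
      ring
    · -- j < M : index k = M - j ≥ 1
      have hk1 : 1 ≤ M - j := by omega
      rw [abp, if_neg (by omega), one_mul]
      have e1 : ((M+1:ℕ):ℚ) - ((M-j:ℕ):ℚ) = (j:ℚ)+1 := by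
        rw [Nat.cast_sub hjM]; push_cast; ring
      have e2 : (M+1) - (M-j) = j+1 := by omega
      have e3 : (1:ℚ) + ((M-j:ℕ):ℚ) = ((M+1-j:ℕ):ℚ) := by
        rw [Nat.cast_sub hjM, Nat.cast_sub (by omega)]; push_cast; ring
      have e5 : (((M+1).choose (M-j) : ℕ) : ℚ) = (((M+1).choose (j+1) : ℕ) : ℚ) := by
        norm_cast
        rw [show M - j = (M+1) - (j+1) by omega]
        exact Nat.choose_symm (by omega)
      rw [e1, e2, e3, e5]
      have e6 : ((M:ℚ)+1) - j = ((M+1-j:ℕ):ℚ) := by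
        rw [Nat.cast_sub (by omega)]; push_cast; ring
      rw [e6]
      have e7 : ((M+1-j:ℕ):ℚ)^(M-j) = ((M+1-j:ℕ):ℚ)^(M-j-1) * ((M+1-j:ℕ):ℚ) := by
        rw [← pow_succ]
        congr 1
        omega
      rw [e7, pow_succ ((j:ℚ)+1)]
      have e8 : ((M+1).choose (j+1) : ℚ) * ((j:ℚ)+1) = ((M+1).choose j : ℚ) * ((M+1-j:ℕ):ℚ) := by
        have h2 : (((M+1).choose (j+1) * (j+1) : ℕ) : ℚ) = (((M+1).choose j * (M+1-j) : ℕ) : ℚ) :=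
          congrArg (Nat.cast (R := ℚ)) (Nat.choose_succ_right_eq (M+1) j)
        push_cast at h2
        push_cast
        linarith
      calc ((M+1).choose (j+1) : ℚ) * (↑(M+1-j):ℚ)^(M-j-1) * (((j:ℚ)+1)^j * ((j:ℚ)+1))
          = (((M+1).choose (j+1) : ℚ) * ((j:ℚ)+1)) * ((↑(M+1-j):ℚ))^(M-j-1) * ((j:ℚ)+1)^j := by
            ring
        _ = (((M+1).choose j : ℚ) * (↑(M+1-j):ℚ)) * ((↑(M+1-j):ℚ))^(M-j-1) * ((j:ℚ)+1)^j := by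
            rw [e8]
        _ = ((M+1).choose j : ℚ) * ((j:ℚ)+1)^j * ((↑(M+1-j):ℚ)^(M-j-1) * (↑(M+1-j):ℚ)) := by
            ring
  rw [h2] at h1
  have h3 : (1 + ((M+1:ℕ):ℚ))^(M+1) = ((M:ℚ)+2)^M * ((M:ℚ)+2) := by
    rw [show (1 + ((M+1:ℕ):ℚ)) = (M:ℚ)+2 by push_cast; ring, pow_succ]
  rw [h3] at h1
  nlinarith [h1]

lemma term_eq (j d : ℕ) :
    ((j:ℚ)+1)^(j+1) / ((j+1).factorial : ℚ) * (((d:ℚ)+1)^d / ((d+1).factorial : ℚ))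
    = ((j+d+1).choose j : ℚ) * ((j:ℚ)+1)^j * ((d:ℚ)+1)^d / ((j+d+1).factorial : ℚ) := by
  have hc : ((j+d+1).choose j * (j.factorial * (d+1).factorial) : ℕ) = (j+d+1).factorial := by
    have h := Nat.choose_mul_factorial_mul_factorial (show j ≤ j+d+1 by omega)
    rw [show j+d+1-j = d+1 by omega] at h
    rw [← mul_assoc]
    exact h
  have hcQ : (((j+d+1).factorial : ℕ) : ℚ)
      = ((j+d+1).choose j : ℚ) * (((j.factorial : ℕ) : ℚ) * (((d+1).factorial : ℕ) : ℚ)) := by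
    exact_mod_cast (congrArg (Nat.cast (R := ℚ)) hc).symm
  rw [hcQ, Nat.factorial_succ j]
  have hj : ((j.factorial : ℕ) : ℚ) ≠ 0 := Nat.cast_ne_zero.mpr j.factorial_ne_zero
  have hd : (((d+1).factorial : ℕ) : ℚ) ≠ 0 := Nat.cast_ne_zero.mpr (d+1).factorial_ne_zero
  have hch : (((j+d+1).choose j : ℕ) : ℚ) ≠ 0 :=
    Nat.cast_ne_zero.mpr (Nat.choose_pos (by omega)).ne'
  have hj1 : ((j:ℚ)+1) ≠ 0 := by positivity
  push_cast
  field_simp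
  ring

lemma mainE (T : PowerSeries ℚ)
    (hT : ∀ n : ℕ, PowerSeries.coeff n T =
      if n = 0 then 0 else (n : ℚ) ^ (n - 1) / (n.factorial : ℚ)) :
    ∀ m : ℕ, ∑ n ∈ range (m+1), (1 / (n.factorial : ℚ)) * PowerSeries.coeff m (T^n)
      = ((m:ℚ)+1)^m / ((m+1).factorial : ℚ) := by
  have hT0 : PowerSeries.constantCoeff T = 0 := by
    have := hT 0
    simpa [PowerSeries.coeff_zero_eq_constantCoeff] using this
  have hvan : ∀ {p n : ℕ}, p < n → PowerSeries.coeff p (T^n) = 0 := by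
    intro p n hpn
    have hX : (PowerSeries.X : PowerSeries ℚ) ∣ T := PowerSeries.X_dvd_iff.mpr hT0
    exact PowerSeries.X_pow_dvd_iff.mp (pow_dvd_pow_of_dvd hX n) p hpn
  intro m
  induction m using Nat.strong_induction_on with
  | _ m IH =>
    match m with
    | 0 => simp
    | (M+1) =>
      have hfac : ∀ n : ℕ, (((n+1).factorial : ℕ) : ℚ) = ((n:ℚ)+1) * ((n.factorial : ℕ) : ℚ) := by
        intro n; rw [Nat.factorial_succ]; push_cast; ring
      apply mul_left_cancel₀ (show ((M:ℚ)+1) ≠ 0 by positivity)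
      have hderiv : ∀ n : ℕ, ((M:ℚ)+1) * PowerSeries.coeff (M+1) (T^(n+1))
          = ((n:ℚ)+1) * ∑ j ∈ range (M+1),
              (PowerSeries.coeff (j+1) T * ((j:ℚ)+1)) * PowerSeries.coeff (M-j) (T^n) := by
        intro n
        have hD := PowerSeries.coeff_derivative (T^(n+1)) M
        have hL : (PowerSeries.derivative ℚ) (T^(n+1))
            = (n+1) • (T^n * (PowerSeries.derivative ℚ) T) := by
          rw [Derivation.leibniz_pow]
          rw [Nat.add_sub_cancel, smul_eq_mul]
        rw [hL] at hD
        rw [mul_comm ((M:ℚ)+1) _, ← hD, map_nsmul, nsmul_eq_mul]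
        congr 1
        · push_cast; ring
        rw [mul_comm (T^n) _, PowerSeries.coeff_mul,
          Finset.Nat.sum_antidiagonal_eq_sum_range_succ_mk]
        refine Finset.sum_congr rfl fun j hj => ?_
        rw [PowerSeries.coeff_derivative]
      calc ((M:ℚ)+1) * ∑ n ∈ range (M+1+1), 1/((n.factorial : ℕ) : ℚ)
              * PowerSeries.coeff (M+1) (T^n)
          = ∑ n ∈ range (M+1+1), 1/((n.factorial : ℕ) : ℚ)
              * (((M:ℚ)+1) * PowerSeries.coeff (M+1) (T^n)) := by
            rw [Finset.mul_sum]
            exact Finset.sum_congr rfl fun n _ => by ring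
        _ = ∑ n ∈ range (M+1), 1/(((n+1).factorial : ℕ) : ℚ)
              * (((M:ℚ)+1) * PowerSeries.coeff (M+1) (T^(n+1))) := by
            rw [Finset.sum_range_succ']
            simp
        _ = ∑ n ∈ range (M+1), 1/((n.factorial : ℕ) : ℚ)
              * ∑ j ∈ range (M+1),
                (PowerSeries.coeff (j+1) T * ((j:ℚ)+1)) * PowerSeries.coeff (M-j) (T^n) := by
            refine Finset.sum_congr rfl fun n _ => ?_
            rw [hderiv n, hfac n]
            have h1 : ((n:ℚ)+1) ≠ 0 := by positivity
            field_simp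
        _ = ∑ j ∈ range (M+1), (PowerSeries.coeff (j+1) T * ((j:ℚ)+1))
              * ∑ n ∈ range (M+1), 1/((n.factorial : ℕ) : ℚ)
                  * PowerSeries.coeff (M-j) (T^n) := by
            simp only [Finset.mul_sum]
            rw [Finset.sum_comm]
            exact Finset.sum_congr rfl fun j _ => Finset.sum_congr rfl fun n _ => by ring
        _ = ∑ j ∈ range (M+1), (PowerSeries.coeff (j+1) T * ((j:ℚ)+1))
              * ∑ n ∈ range (M-j+1), 1/((n.factorial : ℕ) : ℚ)
                  * PowerSeries.coeff (M-j) (T^n) := by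
            refine Finset.sum_congr rfl fun j hj => ?_
            congr 1
            symm
            apply Finset.sum_subset (Finset.range_subset_range.mpr (by omega))
            intro n hn hnot
            have : M - j < n := by
              simp only [Finset.mem_range] at hn hnot
              omega
            rw [hvan this, mul_zero]
        _ = ∑ j ∈ range (M+1), ((M+1).choose j : ℚ) * ((j:ℚ)+1)^j * (((M:ℚ)+1)-j)^(M-j)
              / (((M+1).factorial : ℕ) : ℚ) := by
            refine Finset.sum_congr rfl fun j hj => ?_
            have hjM : j ≤ M := by simpa [Nat.lt_succ_iff] using hj
            rw [IH (M-j) (by omega), hT (j+1), if_neg (by omega), Nat.add_sub_cancel]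
            have h := term_eq j (M-j)
            rw [show j + (M-j) + 1 = M+1 by omega] at h
            push_cast [Nat.cast_sub hjM] at h ⊢
            linear_combination h
        _ = ((M:ℚ)+1) * ((((M+1:ℕ)):ℚ)+1)^(M+1) / (((M+1+1).factorial : ℕ) : ℚ) := by
            rw [← Finset.sum_div, key M]
            rw [hfac (M+1), hfac M]
            push_cast
            rw [show ((M:ℚ)+1+1)^(M+1) = ((M:ℚ)+2)^M * ((M:ℚ)+2) by rw [← pow_succ]; ring_nf]
            have h1 : ((M:ℚ)+1) ≠ 0 := by positivity
            have h2 : ((M:ℚ)+2) ≠ 0 := by positivity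
            have h3 : (((M).factorial : ℕ) : ℚ) ≠ 0 := Nat.cast_ne_zero.mpr M.factorial_ne_zero
            field_simp
            ring
        _ = ((M:ℚ)+1) * (((((M+1:ℕ)):ℚ)+1)^(M+1) / (((M+1+1).factorial : ℕ) : ℚ)) := by
            ring

/-- Composition `g ∘ T` of formal power series over `ℚ`, valid (equal to the usual
substitution) when `T` has zero constant term: the `k`-th coefficient is
`∑_{n ≤ k} (coeff n g) · (coeff k (T^n))`. -/
noncomputable def PowerSeries.comp (g T : PowerSeries ℚ) : PowerSeries ℚ :=
  PowerSeries.mk fun k =>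
    ∑ n ∈ Finset.range (k + 1), PowerSeries.coeff n g * PowerSeries.coeff k (T ^ n)

/-- The tree function `T = ∑_{n≥1} n^{n-1} X^n / n!` (EGF of labeled rooted trees)
satisfies the functional equation `T = X · exp(T)`. -/
theorem stmt6 (T : PowerSeries ℚ)
    (hT : ∀ n : ℕ, PowerSeries.coeff n T =
      if n = 0 then 0 else (n : ℚ) ^ (n - 1) / (n.factorial : ℚ)) :
    T = PowerSeries.X * PowerSeries.comp (PowerSeries.exp ℚ) T := by
  ext m
  rcases m with _ | m
  · rw [hT 0, if_pos rfl]
    simp [PowerSeries.coeff_zero_eq_constantCoeff, map_mul]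
  · rw [PowerSeries.coeff_succ_X_mul, hT (m+1), if_neg (by omega), Nat.add_sub_cancel]
    unfold PowerSeries.comp
    rw [PowerSeries.coeff_mk]
    have hm := mainE T hT m
    have hconv : ∑ n ∈ Finset.range (m + 1),
        PowerSeries.coeff n (PowerSeries.exp ℚ) * PowerSeries.coeff m (T ^ n)
        = ∑ n ∈ Finset.range (m + 1),
          (1 / (n.factorial : ℚ)) * PowerSeries.coeff m (T ^ n) := by
      refine Finset.sum_congr rfl fun n _ => ?_
      rw [PowerSeries.coeff_exp]
      norm_num
    rw [hconv, hm]
    push_cast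
    ring
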